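/- Let p* be the minimizer of D(p) = ∑_{i∈I∈E} p_{i|I} log(|I| p_{i|I}) over the polytope P = {p ∈ ∏_{I∈E} Δ_I : A p = b}, where A is an integer matrix whose row span contains, for each I ∈ E, the indicator vector of the coordinates {(i|I) : i ∈ I}. If p* lies in the interior of ∏_{I∈E} Δ_I (all coordinates strictly between 0 and 1), then for every u ∈ ker A ∩ ℤ^{‖E‖}, the binomial relation ∏ (p*_{i|I})^{u⁺_{i|I}} = ∏ (p*_{i|I})^{u⁻_{i|I}} holds. -/

import Mathlib

lemma hderiv_aux (c p a : ℝ) (hc : 0 < c) (hp : 0 < p) :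
    HasDerivAt (fun t => (p + t * a) * Real.log (c * (p + t * a)))
      (a * Real.log (c * p) + a) 0 := by
  have h1 : HasDerivAt (fun t : ℝ => p + t * a) a 0 := by
    simpa using (((hasDerivAt_id (0:ℝ)).mul_const a).const_add p)
  have h2 : HasDerivAt (fun t : ℝ => c * (p + t * a)) (c * a) 0 := h1.const_mul c
  have hne : c * (p + 0 * a) ≠ 0 := by
    have : (0:ℝ) < c * (p + 0 * a) := by simpa using mul_pos hc hp
    exact ne_of_gt this
  have h3 : HasDerivAt (fun t : ℝ => Real.log (c * (p + t * a)))
      ((c * (p + 0 * a))⁻¹ * (c * a)) 0 := by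
    have := (Real.hasDerivAt_log hne).comp 0 h2; exact this
  have h4 : HasDerivAt (fun t => (p + t * a) * Real.log (c * (p + t * a)))
      (a * Real.log (c * (p + 0 * a)) + (p + 0 * a) * ((c * (p + 0 * a))⁻¹ * (c * a))) 0 :=
    h1.fun_mul h3
  convert h4 using 1
  have hc' := hc.ne'
  have hp' := hp.ne'
  simp only [zero_mul, add_zero]
  field_simp



/-- Variables `p_{i|I}` for `i ∈ I ∈ E`: pairs `(I, i)` with `i ∈ I` and `I ∈ E`. -/
def CPVar (m : ℕ) (E : Finset (Finset (Fin m))) :=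
  {x : Finset (Fin m) × Fin m // x.2 ∈ x.1 ∧ x.1 ∈ E}

instance (m : ℕ) (E : Finset (Finset (Fin m))) : Fintype (CPVar m E) :=
  Subtype.fintype _

set_option maxHeartbeats 1000000 in
/-- If the minimizer `p*` of `D(p) = ∑ p_{i|I} log(|I| p_{i|I})` over
`P = {p ∈ ∏_{I∈E} Δ_I : A p = b}` (with the row span of `A` containing the indicator of
the coordinates of each `I ∈ E`) has all coordinates strictly between `0` and `1`, then
`p*` satisfies the binomial relations `∏ (p*)^{u⁺} = ∏ (p*)^{u⁻}` for all integer kernel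
vectors `u` of `A`. -/
theorem stmt_13 (m : ℕ) (E : Finset (Finset (Fin m)))
    (d : ℕ) (A : Matrix (Fin d) (CPVar m E) ℤ) (b : Fin d → ℝ)
    (hrow : ∀ I ∈ E, ∃ c : Fin d → ℝ, ∀ v : CPVar m E,
      ∑ r, c r * (A r v : ℝ) = if v.1.1 = I then 1 else 0)
    (D : (CPVar m E → ℝ) → ℝ)
    (hD : ∀ q, D q = ∑ v : CPVar m E,
      q v * Real.log ((v.1.1.card : ℝ) * q v))
    (P : Set (CPVar m E → ℝ))
    (hP : P = {p | (∀ v, 0 ≤ p v) ∧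
      (∀ I (hI : I ∈ E), ∑ i ∈ I.attach, p ⟨(I, ↑i), ⟨i.2, hI⟩⟩ = 1) ∧
      (∀ r, ∑ v, (A r v : ℝ) * p v = b r)})
    (pstar : CPVar m E → ℝ)
    (hmin : pstar ∈ P ∧ ∀ q ∈ P, D pstar ≤ D q)
    (hint : ∀ v, 0 < pstar v ∧ pstar v < 1) :
    ∀ u : CPVar m E → ℤ, (∀ r, ∑ v, A r v * u v = 0) →
      ∏ v, pstar v ^ (u v).toNat = ∏ v, pstar v ^ (-(u v)).toNat := by
  classical
  intro u hu
  rcases isEmpty_or_nonempty (CPVar m E) with hemp | hne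
  · simp [Finset.univ_eq_empty]
  set f : CPVar m E → ℝ := fun v => ((u v : ℤ) : ℝ) with hf
  -- A applied to f is zero (real version)
  have hA : ∀ r, ∑ v, (A r v : ℝ) * f v = 0 := by
    intro r
    have : ((∑ v, A r v * u v : ℤ) : ℝ) = 0 := by rw [hu r]; simp
    rw [← this]
    push_cast
    rfl
  -- for each I ∈ E, the sum of f over coordinates of I is zero
  have key1 : ∀ I ∈ E, ∑ v : CPVar m E, (if v.1.1 = I then f v else 0) = 0 := by
    intro I hI
    obtain ⟨c, hc⟩ := hrow I hI
    calc ∑ v : CPVar m E, (if v.1.1 = I then f v else 0)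
        = ∑ v : CPVar m E, (∑ r, c r * (A r v : ℝ)) * f v := by
          refine Finset.sum_congr rfl fun v _ => ?_
          rw [hc v]
          by_cases h : v.1.1 = I <;> simp [h]
      _ = ∑ r, c r * ∑ v, (A r v : ℝ) * f v := by
          simp_rw [Finset.sum_mul, mul_assoc]
          rw [Finset.sum_comm]
          simp_rw [← Finset.mul_sum]
      _ = 0 := by simp [hA]
  -- weighted sums over all coordinates vanish
  have keyw : ∀ w : Finset (Fin m) → ℝ, ∑ v : CPVar m E, f v * w v.1.1 = 0 := by
    intro w
    have hstep : ∀ v : CPVar m E, f v * w v.1.1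
        = ∑ I ∈ E, (if v.1.1 = I then f v else 0) * w I := by
      intro v
      have h1 : ∑ I ∈ E, (if v.1.1 = I then f v else 0) * w I
          = ∑ I ∈ E, (if v.1.1 = I then f v * w I else 0) :=
        Finset.sum_congr rfl fun I _ => by by_cases h : v.1.1 = I <;> simp [h]
      rw [h1, Finset.sum_ite_eq E v.1.1 (fun I => f v * w I), if_pos v.2.2]
    calc ∑ v : CPVar m E, f v * w v.1.1
        = ∑ v : CPVar m E, ∑ I ∈ E, (if v.1.1 = I then f v else 0) * w I := by
          exact Finset.sum_congr rfl fun v _ => hstep v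
      _ = ∑ I ∈ E, (∑ v : CPVar m E, (if v.1.1 = I then f v else 0)) * w I := by
          rw [Finset.sum_comm]
          simp_rw [Finset.sum_mul]
      _ = 0 := by
          refine Finset.sum_eq_zero fun I hI => ?_
          rw [key1 I hI, zero_mul]
  -- relating the attach sums to ite sums
  have hattach : ∀ (I : Finset (Fin m)) (hI : I ∈ E) (q : CPVar m E → ℝ),
      ∑ i ∈ I.attach, q ⟨(I, ↑i), ⟨i.2, hI⟩⟩
        = ∑ v : CPVar m E, if v.1.1 = I then q v else 0 := by
    intro I hI q
    rw [← Finset.sum_filter]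
    refine Finset.sum_bij' (i := fun i _ => (⟨(I, ↑i), ⟨i.2, hI⟩⟩ : CPVar m E))
      (j := fun v hv => ⟨v.1.2, by
        have : v.1.1 = I := (Finset.mem_filter.1 hv).2
        exact this ▸ v.2.1⟩) ?_ ?_ ?_ ?_ ?_
    · intro a ha
      exact Finset.mem_filter.2 ⟨Finset.mem_univ _, rfl⟩
    · intro v hv
      exact Finset.mem_attach _ _
    · intro a ha
      rfl
    · intro v hv
      have h1 : v.1.1 = I := (Finset.mem_filter.1 hv).2
      apply Subtype.ext
      exact Prod.ext h1.symm rfl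
    · intro a ha
      rfl
  -- positivity facts
  have hppos : ∀ v : CPVar m E, 0 < pstar v := fun v => (hint v).1
  have hcpos : ∀ v : CPVar m E, (0:ℝ) < v.1.1.card := by
    intro v
    have : v.1.1.Nonempty := ⟨v.1.2, v.2.1⟩
    exact_mod_cast Finset.card_pos.2 this
  -- a uniform radius
  set δ : ℝ := Finset.univ.inf' Finset.univ_nonempty (fun v => pstar v / (|f v| + 1)) with hδdef
  have hδpos : 0 < δ := by
    rw [hδdef, Finset.lt_inf'_iff]
    intro v _
    have h1 : 0 < |f v| + 1 := by positivity
    exact div_pos (hppos v) h1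
  have hδle : ∀ v : CPVar m E, δ ≤ pstar v / (|f v| + 1) := by
    intro v
    exact Finset.inf'_le _ (Finset.mem_univ v)
  -- perturbed points stay positive
  have hpos' : ∀ t : ℝ, |t| < δ → ∀ v, 0 < pstar v + t * f v := by
    intro t ht v
    have h1 : 0 < |f v| + 1 := by positivity
    have h2 : δ * (|f v| + 1) ≤ pstar v := by
      have := hδle v
      calc δ * (|f v| + 1) ≤ (pstar v / (|f v| + 1)) * (|f v| + 1) := by
            exact mul_le_mul_of_nonneg_right this (le_of_lt h1)
        _ = pstar v := by field_simp
    have h3 : |t * f v| < pstar v := by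
      rw [abs_mul]
      calc |t| * |f v| ≤ |t| * (|f v| + 1) := by
            exact mul_le_mul_of_nonneg_left (by linarith) (abs_nonneg t)
        _ < δ * (|f v| + 1) := by exact mul_lt_mul_of_pos_right ht h1
        _ ≤ pstar v := h2
    have := neg_abs_le (t * f v)
    linarith [abs_lt.1 h3]
  -- the perturbed point is in P
  have hmem : ∀ t : ℝ, |t| < δ → (fun v => pstar v + t * f v) ∈ P := by
    intro t ht
    have hps := hmin.1
    rw [hP] at hps ⊢
    obtain ⟨hps1, hps2, hps3⟩ := hps
    refine ⟨fun v => le_of_lt (hpos' t ht v), ?_, ?_⟩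
    · intro I hI
      rw [Finset.sum_add_distrib]
      have h1 : ∑ i ∈ I.attach, t * f ⟨(I, ↑i), ⟨i.2, hI⟩⟩ = 0 := by
        rw [← Finset.mul_sum, hattach I hI f, key1 I hI, mul_zero]
      rw [hps2 I hI, h1, add_zero]
    · intro r
      simp_rw [mul_add]
      rw [Finset.sum_add_distrib, hps3 r]
      have : ∑ v, (A r v : ℝ) * (t * f v) = t * ∑ v, (A r v : ℝ) * f v := by
        rw [Finset.mul_sum]
        exact Finset.sum_congr rfl fun v _ => by ring
      rw [this, hA r, mul_zero, add_zero]
  -- the one-variable function and its derivative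
  set g : ℝ → ℝ := fun t => ∑ v : CPVar m E,
      (pstar v + t * f v) * Real.log ((v.1.1.card : ℝ) * (pstar v + t * f v)) with hg
  have hg0 : g 0 = D pstar := by
    rw [hg, hD]
    simp
  have hgD : ∀ t, |t| < δ → g t = D (fun v => pstar v + t * f v) := by
    intro t ht
    rw [hg, hD]
  have hlocal : IsLocalMin g 0 := by
    rw [IsLocalMin, IsMinFilter]
    rw [Metric.eventually_nhds_iff]
    refine ⟨δ, hδpos, fun t htd => ?_⟩
    rw [Real.dist_eq, sub_zero] at htd
    rw [hg0, hgD t htd]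
    exact hmin.2 _ (hmem t htd)
  have hgderiv : HasDerivAt g
      (∑ v : CPVar m E, (f v * Real.log ((v.1.1.card : ℝ) * pstar v) + f v)) 0 := by
    apply HasDerivAt.fun_sum
    intro v _
    exact hderiv_aux _ _ _ (hcpos v) (hppos v)
  have hzero : ∑ v : CPVar m E, (f v * Real.log ((v.1.1.card : ℝ) * pstar v) + f v) = 0 :=
    hlocal.hasDerivAt_eq_zero hgderiv
  -- extract ∑ f v * log (pstar v) = 0
  have hexpand : ∀ v : CPVar m E,
      f v * Real.log ((v.1.1.card : ℝ) * pstar v) + f v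
        = f v * Real.log (v.1.1.card : ℝ) + f v * Real.log (pstar v) + f v * 1 := by
    intro v
    rw [Real.log_mul (ne_of_gt (hcpos v)) (ne_of_gt (hppos v))]
    ring
  have hsum0 : ∑ v : CPVar m E, f v * Real.log (pstar v) = 0 := by
    have h1 : ∑ v : CPVar m E, f v * Real.log ((v.1.1).card : ℝ) = 0 :=
      keyw (fun I => Real.log (I.card : ℝ))
    have h2 : ∑ v : CPVar m E, f v * (1:ℝ) = 0 := keyw (fun _ => 1)
    have h3 : ∑ v : CPVar m E,
        (f v * Real.log (v.1.1.card : ℝ) + f v * Real.log (pstar v) + f v * 1) = 0 := by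
      rw [← Finset.sum_congr rfl fun v _ => hexpand v]
      exact hzero
    rw [Finset.sum_add_distrib, Finset.sum_add_distrib, h1, h2] at h3
    linarith
  -- conclude the binomial identity
  have hlog1 : Real.log (∏ v, pstar v ^ (u v).toNat)
      = ∑ v, ((u v).toNat : ℝ) * Real.log (pstar v) := by
    rw [Real.log_prod]
    · exact Finset.sum_congr rfl fun v _ => by rw [Real.log_pow]
    · intro v _
      exact pow_ne_zero _ (ne_of_gt (hppos v))
  have hlog2 : Real.log (∏ v, pstar v ^ (-(u v)).toNat)
      = ∑ v, ((-(u v)).toNat : ℝ) * Real.log (pstar v) := by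
    rw [Real.log_prod]
    · exact Finset.sum_congr rfl fun v _ => by rw [Real.log_pow]
    · intro v _
      exact pow_ne_zero _ (ne_of_gt (hppos v))
  have hcoef : ∀ v : CPVar m E,
      ((u v).toNat : ℝ) - ((-(u v)).toNat : ℝ) = f v := by
    intro v
    have h : ((u v).toNat : ℤ) - (((-(u v)).toNat) : ℤ) = u v := by omega
    have := congrArg (fun z : ℤ => (z : ℝ)) h
    push_cast at this
    exact this
  have hlogeq : Real.log (∏ v, pstar v ^ (u v).toNat)
      = Real.log (∏ v, pstar v ^ (-(u v)).toNat) := by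
    rw [hlog1, hlog2]
    have : ∑ v, (((u v).toNat : ℝ) - ((-(u v)).toNat : ℝ)) * Real.log (pstar v) = 0 := by
      rw [Finset.sum_congr rfl fun v _ => by rw [hcoef v]]
      exact hsum0
    simp_rw [sub_mul] at this
    rw [Finset.sum_sub_distrib] at this
    linarith
  have hp1 : (0:ℝ) < ∏ v, pstar v ^ (u v).toNat :=
    Finset.prod_pos fun v _ => pow_pos (hppos v) _
  have hp2 : (0:ℝ) < ∏ v, pstar v ^ (-(u v)).toNat :=
    Finset.prod_pos fun v _ => pow_pos (hppos v) _
  exact Real.log_injOn_pos (Set.mem_Ioi.2 hp1) (Set.mem_Ioi.2 hp2) hlogeq
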